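/- (Contraction Lemma, quantitative core.) Let k ≥ 2 be an integer, let the flow network have n = |N| ≥ 2 nodes, and define Q = ⌈log_k(4n)⌉, ε = k^{−Q}, M = k^{2Q}. Let Δ > 0 and Δ' = ε⁷Δ, and let x and y be capacity-feasible functions. Let v be a node such that: (a) for every node j ≠ v, either u(v,j) + u(j,v) < ε⁵Δ (the pair is small) or u(v,j) + u(j,v) ≥ 2MΔ (the pair is large); (b) for every large pair {(v,j),(j,v)}, exactly one of r_{vj}(x) and r_{jv}(x) is < MΔ; define Anti to be the set of ordered pairs (i,j) incident to v whose bi-capacity is at least 2MΔ and with r_{ij}(x) < MΔ, and define IMB(v,x) = e_x(v) + Σ_{(j,v)∈Anti} r_{jv}(x) − Σ_{(v,j)∈Anti} r_{vj}(x); assume (c) |IMB(v,x)| > ε⁴Δ and (d) |e_y(v)| < Δ'. Then there exists a pair (i,j) ∈ Anti with r_{ij}(y) > MΔ'. -/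
import Mathlib


open Finset

variable {V : Type*}

/-- The excess of node `v` under `x`: total inflow minus total outflow. -/
def excess [Fintype V] (x : V → V → ℝ) (v : V) : ℝ :=
  (∑ j, x j v) - ∑ j, x v j

/-- `x` is capacity-feasible for capacities `u`: `0 ≤ x i j ≤ u i j` on distinct pairs. -/
def IsCapFeasible (u x : V → V → ℝ) : Prop :=
  ∀ i j, i ≠ j → 0 ≤ x i j ∧ x i j ≤ u i j

/-- A preflow: capacity-feasible with nonnegative excess at every node other than `s`. -/
def IsPreflow [Fintype V] (u : V → V → ℝ) (s : V) (x : V → V → ℝ) : Prop :=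
  IsCapFeasible u x ∧ ∀ v, v ≠ s → 0 ≤ excess x v

/-- A flow: capacity-feasible with zero excess at every node other than `s` and `t`. -/
def IsFlow [Fintype V] (u : V → V → ℝ) (s t : V) (x : V → V → ℝ) : Prop :=
  IsCapFeasible u x ∧ ∀ v, v ≠ s → v ≠ t → excess x v = 0

/-- Residual capacity of the pair `(i,j)` with respect to `x`. -/
def res (u x : V → V → ℝ) (i j : V) : ℝ := u i j + x j i - x i j

/-- A labeling `d` is valid w.r.t. `x`: `d t = 0` and `d i ≤ d j + 1` across residual arcs. -/
def IsValidLabeling [Fintype V] (u x : V → V → ℝ) (t : V) (d : V → ℕ) : Prop :=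
  d t = 0 ∧ ∀ i j, i ≠ j → 0 < res u x i j → d i ≤ d j + 1

set_option maxHeartbeats 1000000 in
open Classical in
/-- Quantitative core of the Contraction Lemma: a node with no medium arcs and a
large `Δ`-imbalance becomes incident to a bi-abundant arc by the `Δ' = ε⁷Δ` phase. -/
theorem contraction_lemma_core [Fintype V] (hn : 2 ≤ Fintype.card V)
    (s t : V) (hst : s ≠ t)
    (k Q : ℕ) (hk : 2 ≤ k)
    (hQpos : 0 < Q) (hQ : 4 * Fintype.card V ≤ k ^ Q)
    (hQmin : ∀ Q' : ℕ, 0 < Q' → 4 * Fintype.card V ≤ k ^ Q' → Q ≤ Q')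
    (ε M : ℝ) (hε : ε = ((k : ℝ) ^ Q)⁻¹) (hM : M = (k : ℝ) ^ (2 * Q))
    (Δ Δ' : ℝ) (hΔ : 0 < Δ) (hΔ' : Δ' = ε ^ 7 * Δ)
    (u : V → V → ℝ) (hu : ∀ i j, i ≠ j → 0 ≤ u i j)
    (x y : V → V → ℝ) (hx : IsCapFeasible u x) (hy : IsCapFeasible u y)
    (v : V)
    (ha : ∀ j, j ≠ v → u v j + u j v < ε ^ 5 * Δ ∨ 2 * M * Δ ≤ u v j + u j v)
    (hb : ∀ j, j ≠ v → 2 * M * Δ ≤ u v j + u j v →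
      (res u x v j < M * Δ ↔ ¬ res u x j v < M * Δ))
    (hc : ε ^ 4 * Δ <
      |excess x v
        + ∑ j ∈ univ.filter
            (fun j => j ≠ v ∧ 2 * M * Δ ≤ u j v + u v j ∧ res u x j v < M * Δ),
            res u x j v
        - ∑ j ∈ univ.filter
            (fun j => j ≠ v ∧ 2 * M * Δ ≤ u v j + u j v ∧ res u x v j < M * Δ),
            res u x v j|)
    (hd : |excess y v| < Δ') :
    ∃ j, j ≠ v ∧ 2 * M * Δ ≤ u v j + u j v ∧
      ((res u x v j < M * Δ ∧ M * Δ' < res u y v j) ∨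
       (res u x j v < M * Δ ∧ M * Δ' < res u y j v)) := by
  classical
  by_contra hcon
  push_neg at hcon
  -- basic positivity facts
  have hkQ : (0:ℝ) < (k:ℝ) ^ Q := by positivity
  have hε0 : 0 < ε := by rw [hε]; positivity
  set n : ℝ := (Fintype.card V : ℝ) with hn_def
  have hn2 : (2:ℝ) ≤ n := by rw [hn_def]; exact_mod_cast hn
  have hεn : ε * (4 * n) ≤ 1 := by
    rw [hε, inv_mul_le_iff₀ hkQ, mul_one]
    rw [hn_def]
    exact_mod_cast hQ
  have hε8 : 8 * ε ≤ 1 := by nlinarith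
  have hMε : M * ε ^ 2 = 1 := by
    rw [hM, hε, mul_comm 2 Q, pow_mul]
    field_simp
  have hMΔ' : M * Δ' = ε ^ 5 * Δ := by
    have : M * Δ' = (M * ε ^ 2) * (ε ^ 5 * Δ) := by rw [hΔ']; ring
    rw [this, hMε, one_mul]
  -- the sets
  set Ain := univ.filter
      (fun j => j ≠ v ∧ 2 * M * Δ ≤ u j v + u v j ∧ res u x j v < M * Δ) with hAin
  set Aout := univ.filter
      (fun j => j ≠ v ∧ 2 * M * Δ ≤ u v j + u j v ∧ res u x v j < M * Δ) with hAout
  set B := univ.filter (fun j => j ≠ v) with hB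
  set Sm := B \ (Ain ∪ Aout) with hSm
  have h_sub : Ain ∪ Aout ⊆ B := by
    intro j hj
    simp only [hAin, hAout, hB, mem_union, mem_filter, mem_univ, true_and] at *
    tauto
  have h_disj : Disjoint Ain Aout := by
    rw [Finset.disjoint_left]
    intro j hin hout
    simp only [hAin, hAout, mem_filter, mem_univ, true_and] at hin hout
    obtain ⟨hjv, hlin, hrin⟩ := hin
    obtain ⟨_, hlout, hrout⟩ := hout
    exact ((hb j hjv hlout).mp hrout) hrin
  have h_small : ∀ j ∈ Sm, u v j + u j v < ε ^ 5 * Δ := by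
    intro j hj
    rw [hSm, mem_sdiff] at hj
    obtain ⟨hjB, hnot⟩ := hj
    have hjv : j ≠ v := by
      rw [hB, mem_filter] at hjB
      exact hjB.2
    rcases ha j hjv with h | hlarge
    · exact h
    · exfalso
      apply hnot
      rw [mem_union]
      have hiff := hb j hjv hlarge
      by_cases hvj : res u x v j < M * Δ
      · refine Or.inr ?_
        rw [hAout, mem_filter]
        exact ⟨mem_univ j, hjv, hlarge, hvj⟩
      · refine Or.inl ?_
        rw [hAin, mem_filter]
        refine ⟨mem_univ j, hjv, by linarith, ?_⟩
        by_contra hjv2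
        exact hvj (hiff.mpr hjv2)
  -- difference function
  set f : V → ℝ := fun j => (x j v - x v j) - (y j v - y v j) with hf
  have hfv : f v = 0 := by simp [hf]
  have h_univ : ∑ j, f j = excess x v - excess y v := by
    simp only [hf, excess, Finset.sum_sub_distrib]
  have h_B : ∑ j ∈ B, f j = ∑ j, f j := by
    apply Finset.sum_subset (Finset.filter_subset _ _)
    intro j _ hj
    simp only [hB, mem_filter, mem_univ, true_and, not_not] at hj
    rw [hj, hfv]
  have h_split : ∑ j ∈ Sm, f j + ∑ j ∈ Ain ∪ Aout, f j = ∑ j ∈ B, f j :=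
    Finset.sum_sdiff h_sub
  have h_union : ∑ j ∈ Ain ∪ Aout, f j = ∑ j ∈ Ain, f j + ∑ j ∈ Aout, f j :=
    Finset.sum_union h_disj
  -- residual differences
  have h_res_in : ∑ j ∈ Ain, res u x j v - ∑ j ∈ Ain, res u y j v
      = - ∑ j ∈ Ain, f j := by
    rw [← Finset.sum_sub_distrib, ← Finset.sum_neg_distrib]
    apply Finset.sum_congr rfl
    intro j _
    simp only [res, hf]; ring
  have h_res_out : ∑ j ∈ Aout, res u x v j - ∑ j ∈ Aout, res u y v j
      = ∑ j ∈ Aout, f j := by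
    rw [← Finset.sum_sub_distrib]
    apply Finset.sum_congr rfl
    intro j _
    simp only [res, hf]; ring
  set Fx := excess x v + ∑ j ∈ Ain, res u x j v - ∑ j ∈ Aout, res u x v j with hFx
  set Fy := excess y v + ∑ j ∈ Ain, res u y j v - ∑ j ∈ Aout, res u y v j with hFy
  have h_diff : Fx - Fy = ∑ j ∈ Sm, f j := by
    have : Fx - Fy = (excess x v - excess y v)
        + (∑ j ∈ Ain, res u x j v - ∑ j ∈ Ain, res u y j v)
        - (∑ j ∈ Aout, res u x v j - ∑ j ∈ Aout, res u y v j) := by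
      rw [hFx, hFy]; ring
    rw [this, h_res_in, h_res_out, ← h_univ, ← h_B, ← h_split, h_union]
    ring
  -- bound on small terms
  have h_f_bound : ∀ j ∈ Sm, |f j| ≤ 2 * (ε ^ 5 * Δ) := by
    intro j hj
    have hjv : j ≠ v := by
      have := (h_sub.trans (Finset.filter_subset _ _))
      simp only [hSm, mem_sdiff, hB, mem_filter, mem_univ, true_and] at hj
      exact hj.1
    have hsmall := h_small j hj
    have huvj := hu v j (Ne.symm hjv)
    have hujv := hu j v hjv
    have hx1 := hx v j (Ne.symm hjv)
    have hx2 := hx j v hjv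
    have hy1 := hy v j (Ne.symm hjv)
    have hy2 := hy j v hjv
    rw [abs_le]
    constructor <;> simp only [hf] <;> linarith
  have h_card_Sm : (Sm.card : ℝ) ≤ n := by
    rw [hn_def]
    have h1 : Sm.card ≤ Fintype.card V := by
      simpa using Finset.card_le_card (Finset.subset_univ Sm)
    exact_mod_cast h1
  have h_sum_Sm : |∑ j ∈ Sm, f j| ≤ n * (2 * (ε ^ 5 * Δ)) := by
    calc |∑ j ∈ Sm, f j| ≤ ∑ j ∈ Sm, |f j| := Finset.abs_sum_le_sum_abs _ _
    _ ≤ Sm.card • (2 * (ε ^ 5 * Δ)) := Finset.sum_le_card_nsmul _ _ _ h_f_bound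
    _ = (Sm.card : ℝ) * (2 * (ε ^ 5 * Δ)) := by rw [nsmul_eq_mul]
    _ ≤ n * (2 * (ε ^ 5 * Δ)) := by
        apply mul_le_mul_of_nonneg_right h_card_Sm
        positivity
  -- bounds on Fy sums using the negated conclusion
  have h_y_in : ∀ j ∈ Ain, 0 ≤ res u y j v ∧ res u y j v ≤ ε ^ 5 * Δ := by
    intro j hj
    simp only [hAin, mem_filter, mem_univ, true_and] at hj
    obtain ⟨hjv, hl, hr⟩ := hj
    have hlarge : 2 * M * Δ ≤ u v j + u j v := by linarith
    have h1 := (hcon j hjv hlarge).2 hr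
    have hy1 := hy v j (Ne.symm hjv)
    have hy2 := hy j v hjv
    have hujv := hu j v hjv
    constructor
    · simp only [res]; linarith
    · linarith [hMΔ' ▸ h1]
  have h_y_out : ∀ j ∈ Aout, 0 ≤ res u y v j ∧ res u y v j ≤ ε ^ 5 * Δ := by
    intro j hj
    simp only [hAout, mem_filter, mem_univ, true_and] at hj
    obtain ⟨hjv, hl, hr⟩ := hj
    have h1 := (hcon j hjv hl).1 hr
    have hy1 := hy v j (Ne.symm hjv)
    have hy2 := hy j v hjv
    have huvj := hu v j (Ne.symm hjv)
    constructor
    · simp only [res]; linarith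
    · linarith [hMΔ' ▸ h1]
  have h_card_A : (Ain.card : ℝ) + (Aout.card : ℝ) ≤ n := by
    rw [hn_def]
    have : Ain.card + Aout.card = (Ain ∪ Aout).card :=
      (Finset.card_union_of_disjoint h_disj).symm
    have h2 : (Ain ∪ Aout).card ≤ Fintype.card V := by
      rw [← Finset.card_univ]
      exact Finset.card_le_card (Finset.subset_univ _)
    exact_mod_cast this ▸ h2
  have h_Sin_lo : 0 ≤ ∑ j ∈ Ain, res u y j v :=
    Finset.sum_nonneg fun j hj => (h_y_in j hj).1
  have h_Sin_hi : ∑ j ∈ Ain, res u y j v ≤ (Ain.card : ℝ) * (ε ^ 5 * Δ) := by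
    calc ∑ j ∈ Ain, res u y j v ≤ Ain.card • (ε ^ 5 * Δ) :=
      Finset.sum_le_card_nsmul _ _ _ fun j hj => (h_y_in j hj).2
    _ = (Ain.card : ℝ) * (ε ^ 5 * Δ) := by rw [nsmul_eq_mul]
  have h_Sout_lo : 0 ≤ ∑ j ∈ Aout, res u y v j :=
    Finset.sum_nonneg fun j hj => (h_y_out j hj).1
  have h_Sout_hi : ∑ j ∈ Aout, res u y v j ≤ (Aout.card : ℝ) * (ε ^ 5 * Δ) := by
    calc ∑ j ∈ Aout, res u y v j ≤ Aout.card • (ε ^ 5 * Δ) :=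
      Finset.sum_le_card_nsmul _ _ _ fun j hj => (h_y_out j hj).2
    _ = (Aout.card : ℝ) * (ε ^ 5 * Δ) := by rw [nsmul_eq_mul]
  -- final contradiction
  have hd' := abs_lt.mp hd
  have hcin : (0:ℝ) ≤ (Ain.card : ℝ) := Nat.cast_nonneg _
  have hcout : (0:ℝ) ≤ (Aout.card : ℝ) := Nat.cast_nonneg _
  have hε5Δ : 0 ≤ ε ^ 5 * Δ := by positivity
  have hA1 : (Ain.card : ℝ) * (ε ^ 5 * Δ) ≤ n * (ε ^ 5 * Δ) :=
    mul_le_mul_of_nonneg_right (by linarith) hε5Δ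
  have hA2 : (Aout.card : ℝ) * (ε ^ 5 * Δ) ≤ n * (ε ^ 5 * Δ) :=
    mul_le_mul_of_nonneg_right (by linarith) hε5Δ
  have h_Fy_bound : |Fy| ≤ Δ' + n * (ε ^ 5 * Δ) := by
    rw [abs_le]
    constructor
    · rw [hFy]; linarith
    · rw [hFy]; linarith
  have h_Fx_bound : |Fx| ≤ |Fy| + |Fx - Fy| := by
    calc |Fx| = |Fy + (Fx - Fy)| := by congr 1; ring
    _ ≤ |Fy| + |Fx - Fy| := abs_add_le _ _
  have hc' : ε ^ 4 * Δ < |Fx| := hc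
  rw [h_diff] at h_Fx_bound
  have hfinal : ε ^ 4 * Δ < ε ^ 7 * Δ + n * (ε ^ 5 * Δ) + n * (2 * (ε ^ 5 * Δ)) := by
    have := h_Fx_bound.trans (by linarith [h_sum_Sm, h_Fy_bound] :
      |Fy| + |∑ j ∈ Sm, f j| ≤ Δ' + n * (ε ^ 5 * Δ) + n * (2 * (ε ^ 5 * Δ)))
    rw [hΔ'] at this
    linarith
  have hE : 0 < ε ^ 4 * Δ := by positivity
  have hε18 : ε ≤ 1 / 8 := by linarith
  have hε3 : ε ^ 3 ≤ 1 / 512 := by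
    calc ε ^ 3 ≤ (1 / 8 : ℝ) ^ 3 := pow_le_pow_left₀ hε0.le hε18 3
    _ = 1 / 512 := by norm_num
  have h1 : ε ^ 7 * Δ ≤ (1 / 512) * (ε ^ 4 * Δ) := by
    have : ε ^ 7 * Δ = ε ^ 3 * (ε ^ 4 * Δ) := by ring
    rw [this]
    exact mul_le_mul_of_nonneg_right hε3 hE.le
  have hεn4 : ε * n ≤ 1 / 4 := by linarith
  have h2 : n * (ε ^ 5 * Δ) ≤ (1 / 4) * (ε ^ 4 * Δ) := by
    have heq : n * (ε ^ 5 * Δ) = (ε * n) * (ε ^ 4 * Δ) := by ring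
    rw [heq]
    exact mul_le_mul_of_nonneg_right hεn4 hE.le
  linarith
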